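/- Under the Hagedorn conditions, symmetry of BA⁻¹ is propagated: if A, B solve A' = iB − [R, A], B' = iQ(t)A − [R, B] with R skew-symmetric, Q(t) symmetric, A(t) invertible for all t, and A₀ᵀB₀ = B₀ᵀA₀, then B(t)A(t)⁻¹ is a symmetric matrix for all t. -/

import Mathlib

open Matrix NormedSpace

attribute [local instance] Matrix.linftyOpNormedAddCommGroup Matrix.linftyOpNormedRing
  Matrix.linftyOpNormedAlgebra

private theorem hasDerivAt_of_entries {d : ℕ} {f : ℝ → Matrix (Fin d) (Fin d) ℂ}
    {f' : Matrix (Fin d) (Fin d) ℂ} {t : ℝ}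
    (h : ∀ i j, HasDerivAt (fun s => f s i j) (f' i j) t) : HasDerivAt f f' t := by
  have h2 : HasDerivAt (fun s => ∑ i, ∑ j, f s i j • Matrix.single i j (1:ℂ))
      (∑ i, ∑ j, f' i j • Matrix.single i j (1:ℂ)) t :=
    HasDerivAt.fun_sum fun i _ => HasDerivAt.fun_sum fun j _ => (h i j).smul_const _
  simpa [← matrix_eq_sum_single] using h2

theorem hagedorn_symmetry_propagation (d : ℕ)
    (A B : ℝ → Matrix (Fin d) (Fin d) ℂ)
    (R : Matrix (Fin d) (Fin d) ℝ) (hR : Rᵀ = -R)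
    (Q : ℝ → Matrix (Fin d) (Fin d) ℝ) (hQ : ∀ t, (Q t)ᵀ = Q t)
    (hA : ∀ t i j, HasDerivAt (fun s => A s i j)
      ((Complex.I • B t
        - (R.map Complex.ofReal * A t - A t * R.map Complex.ofReal)) i j) t)
    (hB : ∀ t i j, HasDerivAt (fun s => B s i j)
      ((Complex.I • ((Q t).map Complex.ofReal * A t)
        - (R.map Complex.ofReal * B t - B t * R.map Complex.ofReal)) i j) t)
    (hInv : ∀ t, IsUnit (A t).det)
    (hSym0 : (A 0)ᵀ * B 0 = (B 0)ᵀ * A 0) :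
    ∀ t, (B t * (A t)⁻¹)ᵀ = B t * (A t)⁻¹ := by
  set R' : Matrix (Fin d) (Fin d) ℂ := R.map Complex.ofReal with hR'def
  have hR' : R'ᵀ = -R' := by
    ext i j
    have := congrFun (congrFun hR i) j
    simp only [transpose_apply, neg_apply] at this ⊢
    simp [hR'def, this]
  have hQ' : ∀ t, ((Q t).map Complex.ofReal)ᵀ = (Q t).map Complex.ofReal := by
    intro t; ext i j
    have := congrFun (congrFun (hQ t) i) j
    simp only [transpose_apply] at this ⊢
    simp [this]
  -- matrix-level derivatives
  have hA' : ∀ t, HasDerivAt A (Complex.I • B t - (R' * A t - A t * R')) t :=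
    fun t => hasDerivAt_of_entries (hA t)
  have hB' : ∀ t, HasDerivAt B
      (Complex.I • ((Q t).map Complex.ofReal * A t) - (R' * B t - B t * R')) t :=
    fun t => hasDerivAt_of_entries (hB t)
  have hAT : ∀ t, HasDerivAt (fun s => (A s)ᵀ)
      ((Complex.I • B t - (R' * A t - A t * R'))ᵀ) t :=
    fun t => hasDerivAt_of_entries (fun i j => hA t j i)
  have hBT : ∀ t, HasDerivAt (fun s => (B s)ᵀ)
      ((Complex.I • ((Q t).map Complex.ofReal * A t) - (R' * B t - B t * R'))ᵀ) t :=
    fun t => hasDerivAt_of_entries (fun i j => hB t j i)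
  set G : ℝ → Matrix (Fin d) (Fin d) ℂ := fun s => (A s)ᵀ * B s - (B s)ᵀ * A s with hGdef
  have hG : ∀ t, HasDerivAt G (G t * R' - R' * G t) t := by
    intro t
    have h := ((hAT t).mul (hB' t)).sub ((hBT t).mul (hA' t))
    refine h.congr_deriv ?_
    simp only [hGdef, transpose_sub, transpose_smul, transpose_mul, hR', hQ' t,
      transpose_neg]
    simp only [mul_sub, sub_mul, neg_mul, mul_neg, smul_mul_assoc, mul_smul_comm,
      smul_sub, smul_neg, mul_assoc]
    abel
  -- exponential conjugation
  set E : ℝ → Matrix (Fin d) (Fin d) ℂ := fun s => NormedSpace.exp (s • R') with hEdef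
  set F : ℝ → Matrix (Fin d) (Fin d) ℂ := fun s => NormedSpace.exp (s • (-R')) with hFdef
  have hcomm : ∀ s : ℝ, Commute (s • R') (s • (-R')) :=
    fun s => (((Commute.refl R').neg_right).smul_left s).smul_right s
  have hEF : ∀ s, E s * F s = 1 := by
    intro s
    rw [hEdef, hFdef]
    beta_reduce
    refine (exp_add_of_commute (hcomm s)).symm.trans ?_
    simp [exp_zero]
  have hFE : ∀ s, F s * E s = 1 := by
    intro s
    rw [hEdef, hFdef]
    beta_reduce
    refine (exp_add_of_commute (hcomm s).symm).symm.trans ?_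
    simp [exp_zero]
  have hRF : ∀ s, R' * F s = F s * R' := by
    intro s
    exact (((Commute.refl R').neg_left.smul_left s).exp_left).symm.eq
  have hE' : ∀ t, HasDerivAt E (E t * R') t := fun t => hasDerivAt_exp_smul_const R' t
  have hF' : ∀ t, HasDerivAt F (F t * (-R')) t := fun t => hasDerivAt_exp_smul_const (-R') t
  set W : ℝ → Matrix (Fin d) (Fin d) ℂ := fun s => E s * G s * F s with hWdef
  have hW : ∀ t, HasDerivAt W 0 t := by
    intro t
    have h := ((hE' t).mul (hG t)).mul (hF' t)
    refine h.congr_deriv ?_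
    simp only [Pi.mul_apply]
    rw [show F t * -R' = -(R' * F t) by rw [hRF t]; noncomm_ring]
    noncomm_ring
  have hWconst : ∀ t, W t = W 0 :=
    fun t => is_const_of_deriv_eq_zero (fun x => (hW x).differentiableAt)
      (fun x => (hW x).deriv) t 0
  have hG0 : G 0 = 0 := by rw [hGdef]; simp [sub_eq_zero.mpr hSym0]
  have hGzero : ∀ t, G t = 0 := by
    intro t
    have h0 : E t * G t * F t = 0 := by
      show W t = 0
      rw [hWconst t]
      show E 0 * G 0 * F 0 = 0
      rw [hG0]
      simp
    calc G t = (F t * E t) * G t * (F t * E t) := by rw [hFE t]; simp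
      _ = F t * (E t * G t * F t) * E t := by noncomm_ring
      _ = 0 := by rw [h0]; simp
  intro t
  have hSym : (A t)ᵀ * B t = (B t)ᵀ * A t := by
    have := hGzero t
    rw [hGdef] at this
    exact sub_eq_zero.mp this
  have hdet : IsUnit (A t)ᵀ.det := by rw [det_transpose]; exact hInv t
  have h1 : A t * (A t)⁻¹ = 1 := mul_nonsing_inv _ (hInv t)
  have h2 : ((A t)ᵀ)⁻¹ * (A t)ᵀ = 1 := nonsing_inv_mul _ hdet
  rw [transpose_mul, transpose_nonsing_inv]
  calc ((A t)ᵀ)⁻¹ * (B t)ᵀ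
      = ((A t)ᵀ)⁻¹ * (B t)ᵀ * (A t * (A t)⁻¹) := by rw [h1]; simp [Matrix.mul_one]
    _ = ((A t)ᵀ)⁻¹ * ((B t)ᵀ * A t) * (A t)⁻¹ := by noncomm_ring
    _ = ((A t)ᵀ)⁻¹ * ((A t)ᵀ * B t) * (A t)⁻¹ := by rw [hSym]
    _ = (((A t)ᵀ)⁻¹ * (A t)ᵀ) * (B t * (A t)⁻¹) := by noncomm_ring
    _ = B t * (A t)⁻¹ := by rw [h2]; simp
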